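/- Let E ⊂ ∂𝔻 be a compact subset of the unit circle with normalized Lebesgue measure m(E) > 0, and let μ be the probability measure with density χ_E/m(E) with respect to m. Then sup_{0≤r<1} Σ_{n∈ℤ} r^{2|n|}|μ̂(n)|² = 1/m(E), and for every probability measure ν supported on E one has sup_{0≤r<1} Σ_{n∈ℤ} r^{2|n|}|ν̂(n)|² ≥ 1/m(E). Consequently the harmonic-Hardy-space capacity of E equals m(E). -/

import Mathlib

open MeasureTheory Complex
open scoped ENNReal

noncomputable instance : MeasurableSpace Circle := borel Circle
instance : BorelSpace Circle := ⟨rfl⟩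

/-- The `n`-th Fourier coefficient `μ̂(n) = ∫ z̄^n dμ(z)` of a measure on the unit circle. -/
noncomputable def muHat (μ : Measure Circle) (n : ℤ) : ℂ :=
  ∫ z : Circle, (starRingEnd ℂ (z : ℂ)) ^ n ∂μ

/-- The energy of a measure on the circle for the harmonic Hardy space `h²(𝔻)`:
`ℰ(μ) = sup_{0≤r<1} Σ_{n∈ℤ} r^{2|n|} |μ̂(n)|²`. -/
noncomputable def energyH2 (μ : Measure Circle) : ℝ≥0∞ :=
  ⨆ r : {r : ℝ // 0 ≤ r ∧ r < 1},
    ENNReal.ofReal (∑' n : ℤ, (r : ℝ) ^ (2 * n.natAbs) * ‖muHat μ n‖ ^ 2)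

section CircleAuxSection

open Set Submodule
open scoped InnerProductSpace

set_option linter.unusedSectionVars false

namespace CircleAux

lemma coe_zpow (z : Circle) (n : ℤ) : ((z ^ n : Circle) : ℂ) = (z : ℂ) ^ n := by
  have hp : ∀ (k : ℕ) (w : Circle), ((w ^ k : Circle) : ℂ) = (w : ℂ) ^ k := by
    intro k w
    induction k with
    | zero => simp
    | succ k ih => rw [pow_succ, pow_succ, Circle.coe_mul, ih]
  cases n with
  | ofNat k => simpa using hp k z
  | negSucc k => exact Circle.coe_zpow z _

/-- The character `z ↦ z^n` as a continuous map. -/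
noncomputable def char (n : ℤ) : C(Circle, ℂ) :=
  ⟨fun z => (z : ℂ) ^ n, by
    have : Continuous fun z : Circle => ((z ^ n : Circle) : ℂ) :=
      continuous_subtype_val.comp (continuous_zpow n)
    simpa only [coe_zpow] using this⟩

lemma char_apply (n : ℤ) (z : Circle) : char n z = (z : ℂ) ^ n := rfl

lemma integrable_cont {f : Circle → ℂ} (hf : Continuous f) (ν : Measure Circle)
    [IsFiniteMeasure ν] : Integrable f ν := by
  have h := (hf.locallyIntegrable (μ := ν)).integrableOn_isCompact isCompact_univ
  rwa [IntegrableOn, Measure.restrict_univ] at h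

lemma integral_char (m : Measure Circle) [m.IsHaarMeasure] [IsProbabilityMeasure m]
    {n : ℤ} (hn : n ≠ 0) : ∫ z : Circle, char n z ∂m = 0 := by
  obtain ⟨w, hw⟩ : ∃ w : Circle, (w : ℂ) ^ n ≠ 1 := by
    refine ⟨Circle.exp (Real.pi / n), ?_⟩
    rw [Circle.coe_exp, ← Complex.exp_int_mul]
    have : (n : ℂ) * (((Real.pi / n : ℝ) : ℂ) * Complex.I) = Real.pi * Complex.I := by
      have hn' : (n : ℂ) ≠ 0 := Int.cast_ne_zero.mpr hn
      push_cast
      field_simp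
    rw [this, Complex.exp_pi_mul_I]
    norm_num
  have key : ∫ z : Circle, char n (w * z) ∂m = ∫ z : Circle, char n z ∂m :=
    integral_mul_left_eq_self (fun z => char n z) w
  have expand : ∀ z : Circle, char n (w * z) = (w : ℂ) ^ n * char n z := by
    intro z
    simp [char_apply, mul_zpow]
  rw [integral_congr_ae (Filter.Eventually.of_forall expand), integral_const_mul] at key
  have h2 : ((w : ℂ) ^ n - 1) * ∫ z : Circle, char n z ∂m = 0 := by
    rw [sub_mul, one_mul, key, sub_self]
  rcases mul_eq_zero.mp h2 with h | h
  · exact (hw (by linear_combination h)).elim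
  · exact h

lemma conj_zpow_eq (z : Circle) (n : ℤ) : (starRingEnd ℂ (z : ℂ)) ^ n = char (-n) z := by
  rw [← Circle.coe_inv_eq_conj, ← coe_zpow, char_apply, ← coe_zpow, inv_zpow, zpow_neg]

lemma conj_char_mul (n k : ℤ) (z : Circle) :
    (starRingEnd ℂ) (char n z) * char k z = char (k - n) z := by
  have : (starRingEnd ℂ) (char n z) = (z : ℂ) ^ (-n) := by
    rw [char_apply, map_zpow₀, conj_zpow_eq z n, char_apply]
  rw [this, char_apply, char_apply, ← zpow_add₀ (Circle.coe_ne_zero z)]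
  ring_nf

lemma char_mul_char (a b : ℤ) : char a * char b = char (a + b) := by
  ext z
  simp only [ContinuousMap.mul_apply, char_apply]
  rw [← zpow_add₀ (Circle.coe_ne_zero z)]

lemma char_zero_eq : char 0 = 1 := by
  ext z; simp [char_apply]

lemma star_char (n : ℤ) : star (char n) = char (-n) := by
  ext z
  rw [ContinuousMap.star_apply, char_apply, star_zpow₀]
  simpa [Complex.star_def, map_zpow₀] using conj_zpow_eq z n

/-- The star subalgebra generated by the characters. -/
noncomputable def charSubalgebra : StarSubalgebra ℂ C(Circle, ℂ) where
  toSubalgebra := Algebra.adjoin ℂ (Set.range char)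
  star_mem' := by
    show Algebra.adjoin ℂ (Set.range char) ≤ star (Algebra.adjoin ℂ (Set.range char))
    refine Algebra.adjoin_le ?_
    rintro - ⟨n, rfl⟩
    exact Algebra.subset_adjoin ⟨-n, (star_char n).symm⟩

lemma charSubalgebra_coe :
    Subalgebra.toSubmodule charSubalgebra.toSubalgebra = span ℂ (Set.range char) := by
  apply Algebra.adjoin_eq_span_of_subset
  refine Set.Subset.trans ?_ Submodule.subset_span
  intro x hx
  refine Submonoid.closure_induction (fun _ => id) ⟨0, char_zero_eq⟩ ?_ hx
  rintro - - - - ⟨a, rfl⟩ ⟨b, rfl⟩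
  exact ⟨a + b, (char_mul_char a b).symm⟩

lemma charSubalgebra_separatesPoints : charSubalgebra.SeparatesPoints := by
  intro x y hxy
  refine ⟨_, ⟨char 1, Algebra.subset_adjoin ⟨1, rfl⟩, rfl⟩, ?_⟩
  simp only [char_apply, zpow_one]
  exact fun h => hxy (Circle.ext h)

lemma charSubalgebra_closure_eq_top : charSubalgebra.topologicalClosure = ⊤ :=
  ContinuousMap.starSubalgebra_topologicalClosure_eq_top_of_separatesPoints charSubalgebra
    charSubalgebra_separatesPoints

lemma span_char_closure_eq_top : (span ℂ (Set.range char)).topologicalClosure = ⊤ := by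
  rw [← charSubalgebra_coe]
  exact congr_arg (Subalgebra.toSubmodule <| StarSubalgebra.toSubalgebra ·)
    charSubalgebra_closure_eq_top

/-- Approximation of a continuous function by a trigonometric polynomial. -/
lemma exists_trig_approx (f : C(Circle, ℂ)) {ε : ℝ} (hε : 0 < ε) :
    ∃ b : ℤ →₀ ℂ, ∀ z : Circle, ‖f z - b.sum (fun n c => c * char n z)‖ ≤ ε := by
  have hf : f ∈ (span ℂ (Set.range char)).topologicalClosure := by
    rw [span_char_closure_eq_top]; trivial
  rw [← SetLike.mem_coe, Submodule.topologicalClosure_coe] at hf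
  have hf' : f ∈ closure (span ℂ (Set.range char) : Set C(Circle, ℂ)) := hf
  obtain ⟨q, hq, hdist⟩ := Metric.mem_closure_iff.mp hf' ε hε
  obtain ⟨b, rfl⟩ := (Finsupp.mem_span_range_iff_exists_finsupp).mp hq
  refine ⟨b, fun z => ?_⟩
  have h1 : (b.sum fun n c => c • char n) z = b.sum (fun n c => c * char n z) := by
    rw [Finsupp.sum, Finsupp.sum, ContinuousMap.coe_sum]
    simp [Finset.sum_apply]
  rw [← h1]
  calc ‖f z - (b.sum fun n c => c • char n) z‖
      = dist (f z) ((b.sum fun n c => c • char n) z) := by rw [dist_eq_norm]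
    _ ≤ dist f (b.sum fun n c => c • char n) := ContinuousMap.dist_apply_le_dist z
    _ ≤ ε := le_of_lt hdist

lemma muHat_eq (μ : Measure Circle) (n : ℤ) : muHat μ n = ∫ z : Circle, char (-n) z ∂μ := by
  unfold muHat
  exact integral_congr_ae (Filter.Eventually.of_forall fun z => conj_zpow_eq z n)

lemma conj_mul_self (w : ℂ) : (starRingEnd ℂ) w * w = ((‖w‖ ^ 2 : ℝ) : ℂ) := by
  rw [mul_comm, Complex.mul_conj, Complex.normSq_eq_norm_sq]

lemma integral_char_eq_conj (ν : Measure Circle) (n : ℤ) :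
    ∫ z : Circle, char n z ∂ν = (starRingEnd ℂ) (muHat ν n) := by
  rw [muHat_eq, ← integral_conj]
  refine integral_congr_ae (Filter.Eventually.of_forall fun z => ?_)
  have := congrArg (fun f : C(Circle, ℂ) => f z) (star_char (-n))
  simpa [neg_neg] using this.symm

lemma norm_muHat_le_one (ν : Measure Circle) [IsProbabilityMeasure ν] (n : ℤ) :
    ‖muHat ν n‖ ≤ 1 := by
  have : ‖muHat ν n‖ ≤ 1 * (ν Set.univ).toReal := by
    refine norm_integral_le_of_norm_le_const (Filter.Eventually.of_forall fun z => ?_)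
    rw [norm_zpow, RCLike.norm_conj]
    rw [Circle.norm_coe, one_zpow]
  simpa using this

lemma summable_aux {r : ℝ} (h0 : 0 ≤ r) (h1 : r < 1) {a : ℤ → ℝ}
    (ha : ∀ n, 0 ≤ a n) (hb : ∀ n, a n ≤ 1) :
    Summable fun n : ℤ => r ^ (2 * n.natAbs) * a n := by
  have hr2 : r ^ 2 < 1 := by nlinarith
  have hgeom : Summable fun k : ℕ => (r ^ 2) ^ k :=
    summable_geometric_of_lt_one (by positivity) hr2
  have key : ∀ g : ℕ → ℤ, (∀ k, (g k).natAbs = k) →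
      Summable fun k : ℕ => r ^ (2 * (g k).natAbs) * a (g k) := by
    intro g hg
    refine Summable.of_nonneg_of_le (fun k => mul_nonneg (by positivity) (ha _))
      (fun k => ?_) hgeom
    calc r ^ (2 * (g k).natAbs) * a (g k) ≤ r ^ (2 * (g k).natAbs) * 1 :=
          mul_le_mul_of_nonneg_left (hb _) (by positivity)
      _ = (r ^ 2) ^ k := by rw [mul_one, pow_mul, hg]
  exact Summable.of_nat_of_neg (key (fun k => (k : ℤ)) (fun k => Int.natAbs_natCast k))
    (key (fun k => -(k : ℤ)) (fun k => by simp))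

/-- Finite sums of `‖ν̂(n)‖²` are bounded by the energy. -/
lemma finsum_le_energy (ν : Measure Circle) [IsProbabilityMeasure ν] (s : Finset ℤ) :
    ENNReal.ofReal (∑ n ∈ s, ‖muHat ν n‖ ^ 2) ≤ energyH2 ν := by
  obtain ⟨M, hM⟩ : ∃ M : ℕ, ∀ n ∈ s, n.natAbs ≤ M :=
    ⟨s.sup Int.natAbs, fun n hn => Finset.le_sup hn⟩
  set B := ∑ n ∈ s, ‖muHat ν n‖ ^ 2 with hB
  have hB0 : 0 ≤ B := Finset.sum_nonneg fun n _ => by positivity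
  have step : ∀ r : {r : ℝ // 0 ≤ r ∧ r < 1},
      ENNReal.ofReal ((r : ℝ) ^ (2 * M) * B) ≤ energyH2 ν := by
    rintro ⟨r, h0, h1⟩
    have hsum : Summable fun n : ℤ => r ^ (2 * n.natAbs) * ‖muHat ν n‖ ^ 2 := by
      refine summable_aux h0 h1 (fun n => by positivity) (fun n => ?_)
      have := norm_muHat_le_one ν n
      nlinarith [norm_nonneg (muHat ν n)]
    have hle : r ^ (2 * M) * B ≤ ∑' n : ℤ, r ^ (2 * n.natAbs) * ‖muHat ν n‖ ^ 2 := by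
      rw [hB, Finset.mul_sum]
      refine le_trans (Finset.sum_le_sum fun n hn => ?_) (Summable.sum_le_tsum s
        (fun n _ => by positivity) hsum)
      have hpow : r ^ (2 * M) ≤ r ^ (2 * n.natAbs) :=
        pow_le_pow_of_le_one h0 h1.le (by have := hM n hn; omega)
      exact mul_le_mul_of_nonneg_right hpow (by positivity)
    exact le_trans (ENNReal.ofReal_le_ofReal hle)
      (le_iSup (fun r : {r : ℝ // 0 ≤ r ∧ r < 1} =>
        ENNReal.ofReal (∑' n : ℤ, (r : ℝ) ^ (2 * n.natAbs) * ‖muHat ν n‖ ^ 2)) ⟨r, h0, h1⟩)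
  have htend : Filter.Tendsto
      (fun k : ℕ => ENNReal.ofReal ((1 - 1 / (k + 2) : ℝ) ^ (2 * M) * B))
      Filter.atTop (nhds (ENNReal.ofReal B)) := by
    have h1 : Filter.Tendsto (fun k : ℕ => (1 - 1 / (k + 2) : ℝ)) Filter.atTop (nhds 1) := by
      have := Filter.Tendsto.div_atTop (tendsto_const_nhds (x := (1:ℝ)))
        (Filter.tendsto_atTop_add_const_right Filter.atTop 2
          (tendsto_natCast_atTop_atTop (R := ℝ)))
      simpa using (tendsto_const_nhds (x := (1:ℝ))).sub this
    have h2 : Filter.Tendsto (fun k : ℕ => (1 - 1 / (k + 2) : ℝ) ^ (2 * M) * B)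
        Filter.atTop (nhds B) := by
      have := (h1.pow (2 * M)).mul_const B
      simpa using this
    exact (ENNReal.continuous_ofReal.tendsto B).comp h2
  refine le_of_tendsto htend (Filter.Eventually.of_forall fun k => ?_)
  have hk0 : (0:ℝ) ≤ 1 - 1 / (k + 2) := by
    have : (1 : ℝ) / (k + 2) ≤ 1 := by
      rw [div_le_one (by positivity)]
      linarith [Nat.cast_nonneg (α := ℝ) k]
    linarith
  have hk1 : (1 - 1 / (k + 2) : ℝ) < 1 := by
    have : (0:ℝ) < 1 / (k + 2) := by positivity
    linarith
  exact step ⟨1 - 1 / (k + 2), hk0, hk1⟩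

lemma inv_eq_ofReal {x : ℝ≥0∞} (hx : x ≠ 0) (hx' : x ≠ ⊤) :
    x⁻¹ = ENNReal.ofReal x.toReal⁻¹ := by
  rw [← ENNReal.toReal_inv, ENNReal.ofReal_toReal (ENNReal.inv_ne_top.mpr hx)]

variable (m : Measure Circle) [m.IsHaarMeasure] [IsProbabilityMeasure m]

/-- The characters as elements of `L²(m)`. -/
noncomputable def vchar (n : ℤ) : Lp ℂ 2 m := ContinuousMap.toLp (E := ℂ) 2 m ℂ (char n)

lemma orthonormal_vchar : Orthonormal ℂ (vchar m) := by
  rw [orthonormal_iff_ite]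
  intro i j
  rw [vchar, vchar, ContinuousMap.inner_toLp m (char i) (char j)]
  have : ∀ z : Circle, (starRingEnd ℂ) (char i z) * char j z = char (j - i) z :=
    conj_char_mul i j
  rw [integral_congr_ae (Filter.Eventually.of_forall fun z => (mul_comm _ _).trans (this z))]
  by_cases h : i = j
  · subst h
    simp only [sub_self, if_true]
    have : ∀ z : Circle, char (0:ℤ) z = 1 := fun z => by simp [char_apply]
    rw [integral_congr_ae (Filter.Eventually.of_forall this), integral_const, probReal_univ]
    simp
  · rw [if_neg h, integral_char m (sub_ne_zero.mpr (Ne.symm h))]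

lemma muHat_smul_restrict (E : Set Circle) (n : ℤ) :
    muHat ((m E)⁻¹ • m.restrict E) n = (m E).toReal⁻¹ * ∫ z in E, char (-n) z ∂m := by
  rw [muHat_eq, integral_smul_measure, ENNReal.toReal_inv]
  norm_num

lemma bessel_bound (E : Set Circle) (hEm : MeasurableSet E) (hmE : 0 < m E) (s : Finset ℤ) :
    ∑ n ∈ s, ‖muHat ((m E)⁻¹ • m.restrict E) n‖ ^ 2 ≤ (m E).toReal⁻¹ := by
  have hEfin : m E ≠ ⊤ := measure_ne_top m E
  set t := (m E).toReal with ht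
  have ht0 : 0 < t := ENNReal.toReal_pos hmE.ne' hEfin
  set g : Lp ℂ 2 m := indicatorConstLp 2 hEm hEfin (1 : ℂ) with hg
  have hinner : ∀ n : ℤ, ⟪g, vchar m n⟫_ℂ = ∫ z in E, char n z ∂m := by
    intro n
    rw [hg, L2.inner_indicatorConstLp_one hEm hEfin (vchar m n)]
    refine integral_congr_ae ?_
    exact ae_restrict_of_ae ((ContinuousMap.coeFn_toLp (p := 2) (𝕜 := ℂ) m (char n)))
  have hnormg : ‖g‖ ^ 2 = t := by
    rw [hg, norm_indicatorConstLp two_ne_zero ENNReal.ofNat_ne_top]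
    have h2 : (2 : ℝ≥0∞).toReal = 2 := by norm_num
    rw [h2, norm_one, one_mul, ← Real.rpow_natCast (m.real E ^ (1/(2:ℝ))) 2, ← Real.rpow_mul
      measureReal_nonneg]
    norm_num [ht, measureReal_def]
  have hmu : ∀ n : ℤ, ‖muHat ((m E)⁻¹ • m.restrict E) n‖ = t⁻¹ * ‖⟪vchar m (-n), g⟫_ℂ‖ := by
    intro n
    rw [muHat_smul_restrict, norm_mul, norm_inner_symm, hinner]
    congr 1
    simp [ht0.le, abs_of_nonneg, Real.norm_eq_abs, inv_nonneg]
    rfl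
  calc ∑ n ∈ s, ‖muHat ((m E)⁻¹ • m.restrict E) n‖ ^ 2
      = t⁻¹ ^ 2 * ∑ n ∈ s, ‖⟪vchar m (-n), g⟫_ℂ‖ ^ 2 := by
        rw [Finset.mul_sum]
        exact Finset.sum_congr rfl fun n _ => by rw [hmu n, mul_pow]
    _ = t⁻¹ ^ 2 * ∑ k ∈ s.image (fun n : ℤ => -n), ‖⟪vchar m k, g⟫_ℂ‖ ^ 2 := by
        congr 1
        rw [Finset.sum_image (by intro a _ b _ h; exact neg_inj.mp h)]
    _ ≤ t⁻¹ ^ 2 * ‖g‖ ^ 2 := by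
        have := (orthonormal_vchar m).sum_inner_products_le (s := s.image (fun n : ℤ => -n)) g
        exact mul_le_mul_of_nonneg_left this (by positivity)
    _ = t⁻¹ := by rw [hnormg]; field_simp

lemma energy_upper (E : Set Circle) (hEm : MeasurableSet E) (hmE : 0 < m E) :
    energyH2 ((m E)⁻¹ • m.restrict E) ≤ (m E)⁻¹ := by
  have main : energyH2 ((m E)⁻¹ • m.restrict E) ≤ ENNReal.ofReal (m E).toReal⁻¹ := by
    refine iSup_le ?_
    rintro ⟨r, h0, h1⟩
    refine ENNReal.ofReal_le_ofReal ?_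
    refine tsum_le_of_sum_le' (by positivity) fun s => ?_
    calc ∑ n ∈ s, r ^ (2 * n.natAbs) * ‖muHat ((m E)⁻¹ • m.restrict E) n‖ ^ 2
        ≤ ∑ n ∈ s, ‖muHat ((m E)⁻¹ • m.restrict E) n‖ ^ 2 := by
          refine Finset.sum_le_sum fun n _ => ?_
          have h : r ^ (2 * n.natAbs) ≤ 1 := pow_le_one₀ h0 h1.le
          nlinarith [sq_nonneg (‖muHat ((m E)⁻¹ • m.restrict E) n‖)]
      _ ≤ (m E).toReal⁻¹ := bessel_bound m E hEm hmE s
  exact main.trans_eq (inv_eq_ofReal hmE.ne' (measure_ne_top m E)).symm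

/-- The key step: the energy of a probability measure supported on `E` is at least
`(1-ε)²/(m(E).toReal + 4ε)`. -/
lemma energy_lower_step (E : Set Circle) (hE : IsCompact E) (hmE : 0 < m E)
    (ν : Measure Circle) [IsProbabilityMeasure ν] (hν : ν Eᶜ = 0)
    {ε : ℝ} (hε0 : 0 < ε) (hε1 : ε ≤ 1) :
    ENNReal.ofReal ((1 - ε) ^ 2 / ((m E).toReal + 4 * ε)) ≤ energyH2 ν := by
  set t := (m E).toReal with htdef
  have ht0 : 0 < t := ENNReal.toReal_pos hmE.ne' (measure_ne_top m E)
  obtain ⟨U, hEU, hUopen, hUlt⟩ : ∃ U ⊇ E, IsOpen U ∧ m U < m E + ENNReal.ofReal ε :=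
    Set.exists_isOpen_lt_of_lt E _
      (ENNReal.lt_add_right (measure_ne_top m E) (by simpa using hε0))
  obtain ⟨φ, hφ0, hφ1, hφ01⟩ := exists_continuous_zero_one_of_isClosed
    (hUopen.isClosed_compl) hE.isClosed
    (disjoint_compl_left_iff.mpr hEU)
  set φℂ : C(Circle, ℂ) := ⟨fun z => (φ z : ℂ), Complex.continuous_ofReal.comp φ.continuous⟩
    with hφℂ
  obtain ⟨b, hb⟩ := exists_trig_approx φℂ hε0
  set qc : C(Circle, ℂ) := b.sum (fun n c => c • char n) with hqc
  have hqc_apply : ∀ z, qc z = b.sum (fun n c => c * char n z) := by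
    intro z
    rw [hqc, Finsupp.sum, Finsupp.sum, ContinuousMap.coe_sum]
    simp [Finset.sum_apply]
  have hq_near : ∀ z, ‖φℂ z - qc z‖ ≤ ε := fun z => by rw [hqc_apply]; exact hb z
  have hφint : ∫ z, φℂ z ∂ν = 1 := by
    have hae : ∀ᵐ z ∂ν, φℂ z = 1 := by
      have : ∀ᵐ z ∂ν, z ∈ E := by
        rw [MeasureTheory.ae_iff]
        exact hν
      filter_upwards [this] with z hz
      simp [hφℂ, hφ1 hz]
    rw [integral_congr_ae hae]
    simp
  have hdiff : ‖∫ z, (φℂ z - qc z) ∂ν‖ ≤ ε := by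
    have : ‖∫ z, (φℂ z - qc z) ∂ν‖ ≤ ε * (ν Set.univ).toReal :=
      norm_integral_le_of_norm_le_const (Filter.Eventually.of_forall hq_near)
    simpa using this
  have hqcint : Integrable (fun z => qc z) ν := integrable_cont qc.continuous ν
  have hφℂint : Integrable (fun z => φℂ z) ν := integrable_cont φℂ.continuous ν
  have hI1 : 1 - ε ≤ ‖∫ z, qc z ∂ν‖ := by
    have hsplit : ∫ z, qc z ∂ν = (∫ z, φℂ z ∂ν) - ∫ z, (φℂ z - qc z) ∂ν := by
      rw [integral_sub hφℂint hqcint]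
      ring
    rw [hsplit, hφint]
    calc (1:ℝ) - ε ≤ ‖(1:ℂ)‖ - ‖∫ z, (φℂ z - qc z) ∂ν‖ := by
          rw [norm_one]; linarith
      _ ≤ ‖1 - ∫ z, (φℂ z - qc z) ∂ν‖ := norm_sub_norm_le _ _
  have hI2 : ∫ z, qc z ∂ν = ∑ n ∈ b.support, b n * (starRingEnd ℂ) (muHat ν n) := by
    have : ∫ z, qc z ∂ν = ∑ n ∈ b.support, ∫ z, b n * char n z ∂ν := by
      rw [integral_congr_ae (Filter.Eventually.of_forall hqc_apply)]
      unfold Finsupp.sum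
      rw [integral_finset_sum _ (fun n _ =>
        (integrable_cont (char n).continuous ν).const_mul (b n))]
    rw [this]
    refine Finset.sum_congr rfl fun n _ => ?_
    rw [integral_const_mul, integral_char_eq_conj]
  set B := ∑ n ∈ b.support, ‖muHat ν n‖ ^ 2 with hBdef
  set P := ∑ n ∈ b.support, ‖b n‖ ^ 2 with hPdef
  have hCS : (1 - ε) ^ 2 ≤ P * B := by
    have h1 : ‖∫ z, qc z ∂ν‖ ≤ ∑ n ∈ b.support, ‖b n‖ * ‖muHat ν n‖ := by
      rw [hI2]
      refine le_trans (norm_sum_le _ _) (le_of_eq (Finset.sum_congr rfl fun n _ => ?_))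
      rw [norm_mul, RCLike.norm_conj]
    have h2 : (∑ n ∈ b.support, ‖b n‖ * ‖muHat ν n‖) ^ 2 ≤ P * B :=
      Finset.sum_mul_sq_le_sq_mul_sq b.support _ _
    have h3 : 0 ≤ ∑ n ∈ b.support, ‖b n‖ * ‖muHat ν n‖ :=
      Finset.sum_nonneg fun n _ => mul_nonneg (norm_nonneg _) (norm_nonneg _)
    nlinarith [hI1, norm_nonneg (∫ z, qc z ∂ν)]
  have hP : P = ∫ z, ‖qc z‖ ^ 2 ∂m := by
    have hLqc : (ContinuousMap.toLp (E := ℂ) 2 m ℂ) qc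
        = ∑ n ∈ b.support, b n • vchar m n := by
      rw [hqc, Finsupp.sum, map_sum]
      refine Finset.sum_congr rfl fun n _ => ?_
      rw [_root_.map_smul]
      rfl
    have hinner : ⟪(ContinuousMap.toLp (E := ℂ) 2 m ℂ) qc,
        (ContinuousMap.toLp (E := ℂ) 2 m ℂ) qc⟫_ℂ = (P : ℂ) := by
      rw [hLqc, (orthonormal_vchar m).inner_sum, hPdef]
      push_cast
      refine Finset.sum_congr rfl fun n _ => ?_
      rw [conj_mul_self]
      push_cast
      ring
    have hinner2 : ⟪(ContinuousMap.toLp (E := ℂ) 2 m ℂ) qc,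
        (ContinuousMap.toLp (E := ℂ) 2 m ℂ) qc⟫_ℂ = ((∫ z, ‖qc z‖ ^ 2 ∂m : ℝ) : ℂ) := by
      rw [ContinuousMap.inner_toLp m qc qc]
      rw [integral_congr_ae (Filter.Eventually.of_forall fun z => (mul_comm _ _).trans (conj_mul_self (qc z)))]
      exact integral_ofReal
    exact_mod_cast hinner.symm.trans hinner2
  have hbound : ∫ z, ‖qc z‖ ^ 2 ∂m ≤ t + 4 * ε := by
    have hpoint : ∀ z, ‖qc z‖ ^ 2 ≤ φ z + 3 * ε := by
      intro z
      have h1 : ‖qc z‖ ≤ φ z + ε := by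
        have := hq_near z
        have h2 : ‖qc z‖ - ‖φℂ z‖ ≤ ‖φℂ z - qc z‖ := by
          rw [norm_sub_rev]; exact norm_sub_norm_le _ _
        have h3 : ‖φℂ z‖ = φ z := by
          rw [hφℂ]
          simp only [ContinuousMap.coe_mk, Complex.norm_real, Real.norm_eq_abs]
          exact abs_of_nonneg (hφ01 z).1
        linarith
      have h01 := hφ01 z
      simp only [Set.mem_Icc] at h01
      nlinarith [norm_nonneg (qc z)]
    have hφonly : Integrable (fun z => φ z) m := by
      have h := (integrable_cont φℂ.continuous m).re
      refine h.congr (Filter.Eventually.of_forall fun z => ?_)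
      simp [hφℂ]
    have hφle : ∫ z, φ z ∂m ≤ t + ε := by
      have hind : Integrable (U.indicator fun _ => (1:ℝ)) m :=
        (integrable_const 1).indicator hUopen.measurableSet
      have hmono : ∫ z, φ z ∂m ≤ ∫ z, U.indicator (fun _ => (1:ℝ)) z ∂m := by
        refine integral_mono hφonly hind fun z => ?_
        by_cases hz : z ∈ U
        · rw [Set.indicator_of_mem hz]
          exact (hφ01 z).2
        · rw [Set.indicator_of_notMem hz]
          rw [show φ z = 0 from hφ0 hz]
      rw [integral_indicator_const _ hUopen.measurableSet] at hmono
      have hU' : (m U).toReal ≤ t + ε := by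
        have hUfin : m U ≠ ⊤ := measure_ne_top m U
        have := ENNReal.toReal_mono (by finiteness) hUlt.le
        rwa [ENNReal.toReal_add (measure_ne_top m E) ENNReal.ofReal_ne_top,
          ENNReal.toReal_ofReal hε0.le] at this
      simp only [smul_eq_mul, mul_one] at hmono
      linarith [show m.real U = (m U).toReal from rfl]
    have hqcint2 : Integrable (fun z => ‖qc z‖ ^ 2) m := by
      have : Continuous fun z => ((‖qc z‖ ^ 2 : ℝ) : ℂ) :=
        Complex.continuous_ofReal.comp ((qc.continuous.norm).pow 2)
      have h := (integrable_cont this m).re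
      refine h.congr (Filter.Eventually.of_forall fun z => ?_)
      simp [← Complex.ofReal_pow]
    have hφint' : Integrable (fun z => φ z + 3 * ε) m := hφonly.add (integrable_const _)
    have h5 := integral_mono hqcint2 hφint' hpoint
    rw [integral_add hφonly (integrable_const _), integral_const, probReal_univ] at h5
    simp only [ENNReal.toReal_one, one_smul, smul_eq_mul, one_mul] at h5
    linarith
  have hfinal : (1 - ε) ^ 2 / (t + 4 * ε) ≤ B := by
    have hPB : (1 - ε) ^ 2 ≤ (t + 4 * ε) * B := by
      have hPle : P ≤ t + 4 * ε := hP ▸ hbound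
      have hB0 : 0 ≤ B := Finset.sum_nonneg fun n _ => by positivity
      nlinarith
    rw [div_le_iff₀ (by linarith)]
    linarith [hPB]
  calc ENNReal.ofReal ((1 - ε) ^ 2 / ((m E).toReal + 4 * ε))
      ≤ ENNReal.ofReal B := ENNReal.ofReal_le_ofReal hfinal
    _ ≤ energyH2 ν := finsum_le_energy ν b.support

lemma energy_lower (E : Set Circle) (hE : IsCompact E) (hmE : 0 < m E)
    (ν : Measure Circle) [IsProbabilityMeasure ν] (hν : ν Eᶜ = 0) :
    (m E)⁻¹ ≤ energyH2 ν := by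
  set t := (m E).toReal with htdef
  have ht0 : 0 < t := ENNReal.toReal_pos hmE.ne' (measure_ne_top m E)
  have hseq : Filter.Tendsto (fun k : ℕ => (1 / (k + 1) : ℝ)) Filter.atTop (nhds 0) := by
    have := Filter.Tendsto.div_atTop (tendsto_const_nhds (x := (1:ℝ)))
      (Filter.tendsto_atTop_add_const_right Filter.atTop 1
        (tendsto_natCast_atTop_atTop (R := ℝ)))
    simpa using this
  have htend : Filter.Tendsto
      (fun k : ℕ => ENNReal.ofReal ((1 - 1 / (k + 1)) ^ 2 / (t + 4 * (1 / (k + 1)))))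
      Filter.atTop (nhds (ENNReal.ofReal (1 / t))) := by
    have hnum : Filter.Tendsto (fun k : ℕ => ((1 - 1 / (k + 1) : ℝ)) ^ 2)
        Filter.atTop (nhds 1) := by
      have := ((tendsto_const_nhds (x := (1:ℝ))).sub hseq).pow 2
      simpa using this
    have hden : Filter.Tendsto (fun k : ℕ => (t + 4 * (1 / (k + 1)) : ℝ))
        Filter.atTop (nhds t) := by
      have := (tendsto_const_nhds (x := t)).add (hseq.const_mul 4)
      simpa using this
    have hdiv := hnum.div hden ht0.ne'
    exact (ENNReal.continuous_ofReal.tendsto _).comp hdiv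
  have hle : ∀ k : ℕ, ENNReal.ofReal ((1 - 1 / (k + 1)) ^ 2 / (t + 4 * (1 / (k + 1))))
      ≤ energyH2 ν := by
    intro k
    have hk0 : (0:ℝ) < 1 / (k + 1) := by positivity
    have hk1 : (1 / (k + 1) : ℝ) ≤ 1 := by
      rw [div_le_one (by positivity)]
      linarith [Nat.cast_nonneg (α := ℝ) k]
    exact energy_lower_step m E hE hmE ν hν hk0 hk1
  have := le_of_tendsto htend (Filter.Eventually.of_forall hle)
  rwa [one_div, ← inv_eq_ofReal hmE.ne' (measure_ne_top m E)] at this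

lemma prob_smul_restrict (E : Set Circle) (hEm : MeasurableSet E) (hmE : 0 < m E) :
    IsProbabilityMeasure ((m E)⁻¹ • m.restrict E) := by
  constructor
  rw [Measure.smul_apply, Measure.restrict_apply_univ, smul_eq_mul]
  exact ENNReal.inv_mul_cancel hmE.ne' (measure_ne_top m E)

lemma smul_restrict_compl (E : Set Circle) (hEm : MeasurableSet E) :
    ((m E)⁻¹ • m.restrict E) Eᶜ = 0 := by
  rw [Measure.smul_apply, Measure.restrict_apply hEm.compl]
  simp

end CircleAux

end CircleAuxSection

/-- For a compact `E ⊆ ∂𝔻` with `m(E) > 0` (`m` normalized Haar measure), the measure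
`μ = χ_E/m(E) dm` has energy exactly `1/m(E)`; every probability measure supported on `E`
has energy at least `1/m(E)`; consequently the `h²(𝔻)`-capacity of `E` equals `m(E)`. -/
theorem stmt6 (m : Measure Circle) [m.IsHaarMeasure] [IsProbabilityMeasure m]
    (E : Set Circle) (hE : IsCompact E) (hmE : 0 < m E) :
    energyH2 ((m E)⁻¹ • m.restrict E) = (m E)⁻¹ ∧
    (∀ ν : Measure Circle, IsProbabilityMeasure ν → ν Eᶜ = 0 → (m E)⁻¹ ≤ energyH2 ν) ∧
    (⨆ ν : {ν : Measure Circle // IsProbabilityMeasure ν ∧ ν Eᶜ = 0},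
        (energyH2 (ν : Measure Circle))⁻¹) = m E := by
  have hEm : MeasurableSet E := hE.isClosed.measurableSet
  haveI hprob := CircleAux.prob_smul_restrict m E hEm hmE
  have hcompl := CircleAux.smul_restrict_compl m E hEm
  have h1 : energyH2 ((m E)⁻¹ • m.restrict E) = (m E)⁻¹ :=
    le_antisymm (CircleAux.energy_upper m E hEm hmE)
      (CircleAux.energy_lower m E hE hmE _ hcompl)
  have h2 : ∀ ν : Measure Circle, IsProbabilityMeasure ν → ν Eᶜ = 0 →
      (m E)⁻¹ ≤ energyH2 ν := fun ν hp hz => by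
    haveI := hp
    exact CircleAux.energy_lower m E hE hmE ν hz
  refine ⟨h1, h2, le_antisymm ?_ ?_⟩
  · refine iSup_le ?_
    rintro ⟨ν, hp, hz⟩
    have := h2 ν hp hz
    calc (energyH2 ν)⁻¹ ≤ ((m E)⁻¹)⁻¹ := ENNReal.inv_le_inv.mpr this
      _ = m E := inv_inv _
  · have := le_iSup (fun ν : {ν : Measure Circle // IsProbabilityMeasure ν ∧ ν Eᶜ = 0} =>
      (energyH2 (ν : Measure Circle))⁻¹) ⟨(m E)⁻¹ • m.restrict E, hprob, hcompl⟩
    rw [h1, inv_inv _] at this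
    exact this
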